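/- Under the hypotheses: x_{j-1} < x_j, x* ∈ [x_{j-1}, x_j], N ≥ 1, μ > 0, r > 0, z_{j-1} - f(x*) ≤ K (x* - x_{j-1})^(1/N), z_j - f(x*) ≤ K (x_j - x*)^(1/N) with K defined as K = max{(z_{j-1} - f(x*))(x* - x_{j-1})^(-1/N), (z_j - f(x*))(x_j - x*)^(-1/N)}, M = |z_{j-1} - z_j| (x_j - x_{j-1})^(-1/N), and rμ ≥ 2^(1-1/N) K + (4^(1-1/N) K² - M²)^(1/2) with 4^(1-1/N) K² ≥ M²: the characteristic R = rμ (x_j - x_{j-1})^(1/N) + (z_j - z_{j-1})² / (rμ (x_j - x_{j-1})^(1/N)) - 2(z_{j-1} + z_j) satisfies R ≥ -4 f(x*). -/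

import Mathlib

open Real NNReal

/-- Power-mean inequality: for `0 < p ≤ 1`, `u^p + v^p ≤ 2^(1-p) (u+v)^p`. -/
lemma stmt5_aux {u v p : ℝ} (hu : 0 ≤ u) (hv : 0 ≤ v) (hp : 0 < p) (hp1 : p ≤ 1) :
    u ^ p + v ^ p ≤ 2 ^ (1 - p) * (u + v) ^ p := by
  lift u to ℝ≥0 using hu
  lift v to ℝ≥0 using hv
  have hq : 1 ≤ 1 / p := (le_div_iff₀ hp).2 (by linarith)
  have h := NNReal.rpow_add_le_mul_rpow_add_rpow (u ^ p) (v ^ p) hq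
  have hup : (u ^ p) ^ (1 / p) = u := by
    rw [← NNReal.rpow_mul, mul_one_div_cancel hp.ne', NNReal.rpow_one]
  have hvp : (v ^ p) ^ (1 / p) = v := by
    rw [← NNReal.rpow_mul, mul_one_div_cancel hp.ne', NNReal.rpow_one]
  rw [hup, hvp] at h
  have h2 := NNReal.rpow_le_rpow h hp.le
  rw [← NNReal.rpow_mul, one_div_mul_cancel hp.ne', NNReal.rpow_one,
    NNReal.mul_rpow, ← NNReal.rpow_mul] at h2
  have he : (1 / p - 1) * p = 1 - p := by field_simp
  rw [he] at h2
  exact_mod_cast h2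

/-- the characteristic of an interval containing the global minimizer
is bounded below by -4 f(x*) whenever the reliability condition (28) holds. -/
theorem stmt5 (N r μ K M R fstar zjm zj xjm xj xs : ℝ)
    (hN : 1 ≤ N) (hμ : 0 < μ) (hr : 0 < r)
    (hx : xjm < xj) (hxs1 : xjm ≤ xs) (hxs2 : xs ≤ xj)
    (hK : 0 ≤ K)
    (h1 : zjm - fstar ≤ K * (xs - xjm) ^ (1/N))
    (h2 : zj - fstar ≤ K * (xj - xs) ^ (1/N))
    (hM : M = |zjm - zj| * (xj - xjm) ^ (-(1/N)))
    (hMK : M ^ 2 ≤ 4 ^ (1 - 1/N) * K ^ 2)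
    (h28 : 2 ^ (1 - 1/N) * K + Real.sqrt (4 ^ (1 - 1/N) * K ^ 2 - M ^ 2) ≤ r * μ)
    (hR : R = r * μ * (xj - xjm) ^ (1/N) + (zj - zjm) ^ 2 / (r * μ * (xj - xjm) ^ (1/N))
      - 2 * (zjm + zj)) :
    R ≥ -4 * fstar := by
  have hN0 : (0:ℝ) < N := lt_of_lt_of_le one_pos hN
  set p : ℝ := 1 / N with hpdef
  have hp : 0 < p := by positivity
  have hp1 : p ≤ 1 := by rw [hpdef]; rw [div_le_one hN0]; exact hN
  set d : ℝ := (xj - xjm) ^ p with hddef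
  have hd : 0 < d := Real.rpow_pos_of_pos (by linarith) p
  set s : ℝ := r * μ with hsdef
  have hs : 0 < s := mul_pos hr hμ
  set c : ℝ := 2 ^ (1 - p) * K with hcdef
  have hc : 0 ≤ c := mul_nonneg (Real.rpow_nonneg (by norm_num) _) hK
  -- 4^(1-p) K^2 = c^2
  have h4 : (4:ℝ) ^ (1 - p) = ((2:ℝ) ^ (1 - p)) ^ 2 := by
    rw [← Real.rpow_natCast ((2:ℝ) ^ (1 - p)) 2, ← Real.rpow_mul (by norm_num)]
    rw [show (4:ℝ) = (2:ℝ) ^ ((2:ℕ):ℝ) by rw [Real.rpow_natCast]; norm_num,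
      ← Real.rpow_mul (by norm_num)]
    ring_nf
  have hc2 : 4 ^ (1 - p) * K ^ 2 = c ^ 2 := by rw [hcdef, h4]; ring
  -- quadratic: s^2 - 2 c s + M^2 ≥ 0
  have hdisc : 0 ≤ c ^ 2 - M ^ 2 := by rw [← hc2]; linarith [hMK]
  have h28' : c + Real.sqrt (c ^ 2 - M ^ 2) ≤ s := by rwa [hc2] at h28
  have hsc : Real.sqrt (c ^ 2 - M ^ 2) ≤ s - c := by linarith
  have hsqnn : 0 ≤ Real.sqrt (c ^ 2 - M ^ 2) := Real.sqrt_nonneg _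
  have hsq : c ^ 2 - M ^ 2 ≤ (s - c) ^ 2 := by
    have h' := pow_le_pow_left₀ hsqnn hsc 2
    rwa [Real.sq_sqrt hdisc] at h'
  have key : 0 ≤ s ^ 2 - 2 * c * s + M ^ 2 := by
    have hex : (s - c) ^ 2 = s ^ 2 - 2 * c * s + c ^ 2 := by ring
    linarith
  -- (zj - zjm)^2 = M^2 d^2
  have hdne : d ≠ 0 := hd.ne'
  have hMd : M * d = |zjm - zj| := by
    rw [hM, Real.rpow_neg (by linarith : (0:ℝ) ≤ xj - xjm), ← hddef]
    field_simp
  have hz2 : (zj - zjm) ^ 2 = M ^ 2 * d ^ 2 := by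
    calc (zj - zjm) ^ 2 = |zjm - zj| ^ 2 := by rw [sq_abs]; ring
      _ = (M * d) ^ 2 := by rw [hMd]
      _ = M ^ 2 * d ^ 2 := by ring
  -- power mean
  have hpm : (xs - xjm) ^ p + (xj - xs) ^ p ≤ 2 ^ (1 - p) * d := by
    have := stmt5_aux (u := xs - xjm) (v := xj - xs) (by linarith) (by linarith) hp hp1
    rw [show xs - xjm + (xj - xs) = xj - xjm by ring] at this
    exact this
  -- sum bound
  have hsum : zjm + zj - 2 * fstar ≤ c * d := by
    have hKab : K * ((xs - xjm) ^ p + (xj - xs) ^ p) ≤ K * (2 ^ (1 - p) * d) :=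
      mul_le_mul_of_nonneg_left hpm hK
    rw [hcdef]
    calc zjm + zj - 2 * fstar = (zjm - fstar) + (zj - fstar) := by ring
      _ ≤ K * (xs - xjm) ^ p + K * (xj - xs) ^ p := add_le_add h1 h2
      _ = K * ((xs - xjm) ^ p + (xj - xs) ^ p) := by ring
      _ ≤ K * (2 ^ (1 - p) * d) := hKab
      _ = 2 ^ (1 - p) * K * d := by ring
  -- rewrite R
  have hRval : R = s * d + M ^ 2 * d / s - 2 * (zjm + zj) := by
    rw [hR, hz2]
    field_simp
  have expand : s * d + M ^ 2 * d / s - 2 * (c * d) = d * (s ^ 2 - 2 * c * s + M ^ 2) / s := by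
    field_simp
    ring
  have hfin : 0 ≤ d * (s ^ 2 - 2 * c * s + M ^ 2) / s :=
    div_nonneg (mul_nonneg hd.le key) hs.le
  linarith [hsum, hfin, expand, hRval]
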